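/- Let N ≥ 1, let f : ℝ^N → ℝ be differentiable with gradient K(x) := ∇f(x), and let r : ℝ → ℝ^N be differentiable with r(t) ≠ 0 for all t and satisfying the normalized flow equation r'(t) = λ(t) • r(t) − K(r(t)), where λ(t) := ⟪r(t), K(r(t))⟫ / ‖r(t)‖². Then for every t, the composite t ↦ f(r(t)) is differentiable with derivative −‖K(r(t)) − λ(t) • r(t)‖²; in particular f(r(t)) is nonincreasing in t. -/

import Mathlib

open scoped RealInnerProductSpace

/-- Along the normalized second-order combinatorial curvature flow `r' = λ • r - K(r)`
with `K = ∇f` and `λ(t) = ⟪r, K(r)⟫ / ‖r‖²`, the energy `f(r(t))` is differentiable with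
derivative `-‖K(r(t)) - λ(t) • r(t)‖²`; in particular `f(r(t))` is nonincreasing. -/
theorem stmt_14 {N : ℕ} (hN : 1 ≤ N)
    (f : EuclideanSpace ℝ (Fin N) → ℝ) (hf : Differentiable ℝ f)
    (K : EuclideanSpace ℝ (Fin N) → EuclideanSpace ℝ (Fin N))
    (hK : ∀ x, K x = gradient f x)
    (r : ℝ → EuclideanSpace ℝ (Fin N)) (hr0 : ∀ t, r t ≠ 0)
    (lam : ℝ → ℝ) (hlam : ∀ t, lam t = ⟪r t, K (r t)⟫ / ‖r t‖ ^ 2)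
    (hflow : ∀ t : ℝ, HasDerivAt r (lam t • r t - K (r t)) t) :
    (∀ t : ℝ, HasDerivAt (fun s => f (r s)) (-‖K (r t) - lam t • r t‖ ^ 2) t) ∧
      (∀ t s : ℝ, t ≤ s → f (r s) ≤ f (r t)) := by
  have key : ∀ t : ℝ, HasDerivAt (fun s => f (r s)) (-‖K (r t) - lam t • r t‖ ^ 2) t := by
    intro t
    have hg : HasGradientAt f (K (r t)) (r t) := by
      rw [hK]; exact (hf (r t)).hasGradientAt
    have hF : HasFDerivAt f (InnerProductSpace.toDual ℝ _ (K (r t))) (r t) :=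
      hasGradientAt_iff_hasFDerivAt.mp hg
    have hcomp := hF.comp_hasDerivAt t (hflow t)
    refine (show HasDerivAt (fun s => f (r s)) _ t from hcomp).congr_deriv ?_
    symm
    simp only [InnerProductSpace.toDual_apply_apply]
    have hnorm : ‖r t‖ ^ 2 ≠ 0 := by
      simpa using (norm_ne_zero_iff.mpr (hr0 t))
    have hlr : lam t * ‖r t‖ ^ 2 = ⟪r t, K (r t)⟫ := by
      rw [hlam t]; exact div_mul_cancel₀ _ hnorm
    rw [← real_inner_self_eq_norm_sq]
    simp only [inner_sub_left, inner_sub_right, real_inner_smul_left, real_inner_smul_right,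
      real_inner_self_eq_norm_sq]
    rw [norm_smul, mul_pow, Real.norm_eq_abs, sq_abs]
    have hcomm : ⟪K (r t), r t⟫ = ⟪r t, K (r t)⟫ := real_inner_comm _ _
    linear_combination -lam t * hlr
  refine ⟨key, fun t s hts => ?_⟩
  have hmono : AntitoneOn (fun u => f (r u)) (Set.Icc t s) := by
    apply antitoneOn_of_deriv_nonpos (convex_Icc t s)
    · have hrc : Continuous r := (Differentiable.continuous fun u => (hflow u).differentiableAt)
      exact (hf.continuous.comp hrc).continuousOn
    · intro u _
      exact ((key u).differentiableAt).differentiableWithinAt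
    · intro u _
      rw [(key u).deriv]
      exact neg_nonpos.mpr (by positivity)
  exact hmono (Set.left_mem_Icc.mpr hts) (Set.right_mem_Icc.mpr hts) hts
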